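/- arXiv:1512.08602 — 2 statements merged into one kernel-verified Lean document; each statement's English description precedes it below -/
import Mathlib

section
/- Let M be a matroid on a finite ground set E of n elements with rank r ≥ 1, and suppose every base of M has exactly r elements. Let x* ∈ ℝ^E lie in the convex hull of the characteristic (0/1 indicator) vectors of the bases of M. Then for every real p ≥ 2 and ε > 0, there exist a positive integer k ≤ ⌈4(p−1)·r^{2/p}/ε²⌉ and bases B₁, …, B_k of M (with repetitions allowed) such that ‖(1/k)·Σ_{t=1}^{k} 𝟙_{B_t} − x*‖_p ≤ ε; equivalently, there is a probability distribution over bases of M supported on at most ⌈4(p−1)·r^{2/p}/ε²⌉ bases whose expected indicator vector is within ε of x* in ℓ_p norm. -/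
open Finset
open scoped Classical


lemma rpow_mvt {q : ℝ} (hq : 1 ≤ q) {a b M : ℝ} (ha : 0 ≤ a) (hab : a ≤ b) (hbM : b ≤ M) :
    b ^ q ≤ a ^ q + q * M ^ (q - 1) * (b - a) := by
  rcases eq_or_lt_of_le hab with rfl | hlt
  · simp
  have hM : 0 ≤ M := le_trans (ha.trans hab) hbM
  have hcont : ContinuousOn (fun x : ℝ => x ^ q) (Set.Icc a b) := by
    intro x hx
    exact (Real.continuousAt_rpow_const x q (Or.inr (by linarith))).continuousWithinAt
  have hderiv : ∀ x ∈ Set.Ioo a b, HasDerivAt (fun x : ℝ => x ^ q) (q * x ^ (q - 1)) x :=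
    fun x _ => Real.hasDerivAt_rpow_const (Or.inr hq)
  obtain ⟨c, hc, hceq⟩ := exists_hasDerivAt_eq_slope (fun x : ℝ => x ^ q)
    (fun x => q * x ^ (q - 1)) hlt hcont hderiv
  have hc0 : 0 ≤ c := le_trans ha hc.1.le
  have hcM : c ≤ M := le_trans hc.2.le hbM
  have hle : c ^ (q - 1) ≤ M ^ (q - 1) :=
    Real.rpow_le_rpow hc0 hcM (by linarith : (0:ℝ) ≤ q - 1)
  have heq : b ^ q - a ^ q = q * c ^ (q - 1) * (b - a) := by
    rw [hceq, div_mul_cancel₀]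
    exact sub_ne_zero.mpr hlt.ne'
  have h1 : q * c ^ (q - 1) * (b - a) ≤ q * M ^ (q - 1) * (b - a) := by
    have hq0 : (0:ℝ) ≤ q := by linarith
    have := mul_le_mul_of_nonneg_left hle hq0
    exact mul_le_mul_of_nonneg_right this (by linarith)
  linarith

lemma rpow_sub_two_mul_sq {x p : ℝ} (hx : 0 ≤ x) (hp : p ≠ 0) :
    x ^ (p - 2) * x ^ (2:ℕ) = x ^ p := by
  rw [← Real.rpow_natCast x 2, ← Real.rpow_add' hx (by push_cast; intro h; exact hp (by linarith))]
  norm_num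

lemma rpow_sub_two_mul_self {x p : ℝ} (hx : 0 ≤ x) (hp : p ≠ 1) :
    x ^ (p - 2) * x = x ^ (p - 1) := by
  nth_rewrite 2 [← Real.rpow_one x]
  rw [← Real.rpow_add' hx (by intro h; exact hp (by linarith))]
  congr 1
  ring

/-- Pointwise second-order bound: for `p ≥ 2`, `s ≥ 0`,
`|s+y|^p ≤ s^p + p s^(p-1) y + (p(p-1)/2) (s+|y|)^(p-2) y²`. -/
lemma star' {p : ℝ} (hp : 2 ≤ p) {s : ℝ} (hs : 0 ≤ s) (y : ℝ) :
    |s + y| ^ p ≤ s ^ p + p * s ^ (p-1) * y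
      + (p*(p-1)/2) * (s + |y|) ^ (p-2) * y^2 := by
  have hp1 : (1:ℝ) ≤ p := by linarith
  have hp0 : (0:ℝ) < p := by linarith
  have hp2 : (0:ℝ) ≤ p - 2 := by linarith
  rcases le_or_gt 0 y with hy | hy
  · -- y ≥ 0 : monotone argument on [0,y]
    have habs2 : |y| = y := abs_of_nonneg hy
    set M := s + y with hMdef
    have hM0 : 0 ≤ M := by positivity
    set ψ : ℝ → ℝ := fun u => s^p + p*s^(p-1)*u + (p*(p-1)/2)*M^(p-2)*u^2 - (s+u)^p with hψdef
    have hψd : ∀ u : ℝ, HasDerivAt ψ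
        (p*s^(p-1) + (p*(p-1))*M^(p-2)*u - p*(s+u)^(p-1)) u := by
      intro u
      have h1 : HasDerivAt (fun u : ℝ => s + u) 1 u := (hasDerivAt_id u).const_add s
      have h2 : HasDerivAt (fun u : ℝ => (s+u)^p) (1 * p * (s+u)^(p-1)) u :=
        h1.rpow_const (Or.inr hp1)
      have h3 : HasDerivAt (fun u : ℝ => u^2) (2*u) u := by
        simpa using hasDerivAt_pow 2 u
      have h4 : HasDerivAt (fun u : ℝ => s^p + p*s^(p-1)*u + (p*(p-1)/2)*M^(p-2)*u^2)
          ((p*s^(p-1)) * 1 + ((p*(p-1)/2)*M^(p-2)) * (2*u)) u := by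
        exact (((hasDerivAt_id u).const_mul (p*s^(p-1))).const_add (s^p)).add
          (h3.const_mul ((p*(p-1)/2)*M^(p-2)))
      have := h4.sub h2
      exact this.congr_deriv (by ring)
    have hmono : MonotoneOn ψ (Set.Icc 0 y) := by
      apply monotoneOn_of_deriv_nonneg (convex_Icc 0 y)
      · exact fun u _ => (hψd u).differentiableAt.continuousAt.continuousWithinAt
      · exact fun u _ => (hψd u).differentiableAt.differentiableWithinAt
      · intro u hu
        rw [interior_Icc] at hu
        rw [(hψd u).deriv]
        have hkey := rpow_mvt (q := p-1) (by linarith) (a := s) (b := s+u) (M := M)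
          hs (by linarith [hu.1]) (by simp only [hMdef]; linarith [hu.2])
        have hexp : p - 1 - 1 = p - 2 := by ring
        rw [hexp] at hkey
        have := mul_le_mul_of_nonneg_left hkey hp0.le
        nlinarith [this]
    have h0 : ψ 0 = 0 := by simp [hψdef]
    have hfin : 0 ≤ ψ y := by
      have := hmono (Set.left_mem_Icc.mpr hy) (Set.right_mem_Icc.mpr hy) hy
      rw [h0] at this; exact this
    have habs1 : |s + y| = s + y := abs_of_nonneg (by linarith)
    rw [habs1, habs2]
    simp only [hψdef] at hfin
    linarith
  · rcases le_or_gt 0 (s + y) with hsy | hsy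
    · -- y < 0 ≤ s+y : antitone argument on [y,0]
      have habs2 : |y| = -y := abs_of_neg hy
      set M := s - y with hMdef
      have hM0 : 0 ≤ M := by linarith
      set ψ : ℝ → ℝ := fun u => s^p + p*s^(p-1)*u + (p*(p-1)/2)*M^(p-2)*u^2 - (s+u)^p with hψdef
      have hψd : ∀ u : ℝ, HasDerivAt ψ
          (p*s^(p-1) + (p*(p-1))*M^(p-2)*u - p*(s+u)^(p-1)) u := by
        intro u
        have h1 : HasDerivAt (fun u : ℝ => s + u) 1 u := (hasDerivAt_id u).const_add s
        have h2 : HasDerivAt (fun u : ℝ => (s+u)^p) (1 * p * (s+u)^(p-1)) u :=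
          h1.rpow_const (Or.inr hp1)
        have h3 : HasDerivAt (fun u : ℝ => u^2) (2*u) u := by
          simpa using hasDerivAt_pow 2 u
        have h4 : HasDerivAt (fun u : ℝ => s^p + p*s^(p-1)*u + (p*(p-1)/2)*M^(p-2)*u^2)
            ((p*s^(p-1)) * 1 + ((p*(p-1)/2)*M^(p-2)) * (2*u)) u := by
          exact (((hasDerivAt_id u).const_mul (p*s^(p-1))).const_add (s^p)).add
            (h3.const_mul ((p*(p-1)/2)*M^(p-2)))
        have := h4.sub h2
        exact this.congr_deriv (by ring)
      have hanti : AntitoneOn ψ (Set.Icc y 0) := by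
        apply antitoneOn_of_deriv_nonpos (convex_Icc y 0)
        · exact fun u _ => (hψd u).differentiableAt.continuousAt.continuousWithinAt
        · exact fun u _ => (hψd u).differentiableAt.differentiableWithinAt
        · intro u hu
          rw [interior_Icc] at hu
          rw [(hψd u).deriv]
          have hkey := rpow_mvt (q := p-1) (by linarith) (a := s+u) (b := s) (M := M)
            (by linarith [hu.1]) (by linarith [hu.2]) (by simp only [hMdef]; linarith)
          have hexp : p - 1 - 1 = p - 2 := by ring
          rw [hexp] at hkey
          have := mul_le_mul_of_nonneg_left hkey hp0.le
          nlinarith [this]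
      have h0 : ψ 0 = 0 := by simp [hψdef]
      have hfin : 0 ≤ ψ y := by
        have := hanti (Set.left_mem_Icc.mpr hy.le) (Set.right_mem_Icc.mpr hy.le) hy.le
        rw [h0] at this; exact this
      have habs1 : |s + y| = s + y := abs_of_nonneg hsy
      rw [habs1, habs2]
      simp only [hψdef] at hfin
      have : M = s + -y := by rw [hMdef]; ring
      rw [← this]
      linarith
    · -- s + y < 0 : algebraic case, z := -y > s
      have habs2 : |y| = -y := abs_of_neg hy
      set z : ℝ := -y with hzdef
      clear_value z
      have hz0 : 0 < z := by simp only [hzdef]; linarith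
      have hsz : s < z := by simp only [hzdef]; linarith
      have hzs0 : (0:ℝ) ≤ z - s := by linarith
      have habs1 : |s + y| = z - s := by rw [abs_of_neg hsy]; simp only [hzdef]; ring
      rw [habs1, habs2]
      -- goal : (z-s)^p ≤ s^p + p*s^(p-1)*y + A*(s + z)^(p-2)*y^2,  y = -z
      have e1 : (z - s)^p ≤ z^(p-2) * (z-s)^(2:ℕ) := by
        rw [← rpow_sub_two_mul_sq hzs0 hp0.ne']
        have : (z-s)^(p-2) ≤ z^(p-2) := Real.rpow_le_rpow hzs0 (by linarith) hp2
        exact mul_le_mul_of_nonneg_right this (by positivity)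
      have e2 : p * s^(p-1) * z - s^p ≤ z^(p-2) * (p*s*z - s^(2:ℕ)) := by
        have h1 : s^(p-1) = s^(p-2) * s := (rpow_sub_two_mul_self hs (by linarith)).symm
        have h2 : s^p = s^(p-2) * s^(2:ℕ) := (rpow_sub_two_mul_sq hs hp0.ne').symm
        rw [h1, h2]
        have hfac : 0 ≤ p*s*z - s^(2:ℕ) := by
          nlinarith [mul_le_mul_of_nonneg_left hsz.le hs, mul_nonneg hs hz0.le, hp]
        have hsp : s^(p-2) ≤ z^(p-2) := Real.rpow_le_rpow hs (by linarith) hp2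
        calc p * (s^(p-2) * s) * z - s^(p-2) * s^(2:ℕ)
            = s^(p-2) * (p*s*z - s^(2:ℕ)) := by ring
          _ ≤ z^(p-2) * (p*s*z - s^(2:ℕ)) := mul_le_mul_of_nonneg_right hsp hfac
      have e3 : (z-s)^(2:ℕ) + (p*s*z - s^(2:ℕ)) ≤ (p*(p-1)/2) * z^(2:ℕ) := by
        have h31 : (p-2)*(s*z) ≤ (p-2)*(z*z) :=
          mul_le_mul_of_nonneg_left (mul_le_mul_of_nonneg_right hsz.le hz0.le) hp2
        have h32 : 0 ≤ (p-1)*(p-2)*(z*z) :=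
          mul_nonneg (mul_nonneg (by linarith) hp2) (mul_nonneg hz0.le hz0.le)
        nlinarith [h31, h32]
      have e5 : z^(p-2) * z^(2:ℕ) = z^p := rpow_sub_two_mul_sq hz0.le hp0.ne'
      have e4 : z^(p-2) * (z-s)^(2:ℕ) + z^(p-2) * (p*s*z - s^(2:ℕ))
          ≤ (p*(p-1)/2) * z^p := by
        have h := mul_le_mul_of_nonneg_left e3 (Real.rpow_nonneg hz0.le (p-2))
        calc z^(p-2) * (z-s)^(2:ℕ) + z^(p-2) * (p*s*z - s^(2:ℕ))
            = z^(p-2) * ((z-s)^(2:ℕ) + (p*s*z - s^(2:ℕ))) := by ring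
          _ ≤ z^(p-2) * ((p*(p-1)/2) * z^(2:ℕ)) := h
          _ = (p*(p-1)/2) * (z^(p-2) * z^(2:ℕ)) := by ring
          _ = (p*(p-1)/2) * z^p := by rw [e5]
      have e6 : z^p ≤ (s+z)^(p-2) * z^(2:ℕ) := by
        rw [← rpow_sub_two_mul_sq hz0.le hp0.ne']
        have : z^(p-2) ≤ (s+z)^(p-2) := Real.rpow_le_rpow hz0.le (by linarith) hp2
        exact mul_le_mul_of_nonneg_right this (by positivity)
      have hA : 0 ≤ p*(p-1)/2 := by nlinarith
      have e7 : (p*(p-1)/2) * z^p ≤ (p*(p-1)/2) * ((s+z)^(p-2) * z^(2:ℕ)) :=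
        mul_le_mul_of_nonneg_left e6 hA
      have hy2 : y^(2:ℕ) = z^(2:ℕ) := by simp only [hzdef]; ring
      have hyz : y = -z := by simp only [hzdef]; ring
      rw [hy2, hyz]
      have final : (z-s)^p + (p*s^(p-1)*z - s^p) ≤ (p*(p-1)/2) * ((s+z)^(p-2) * z^(2:ℕ)) := by
        have h1 := add_le_add e1 e2
        nlinarith [h1, e4, e7]
      linarith [final]


lemma sq_rpow_half {s p : ℝ} (hs : 0 ≤ s) : (s^(2:ℕ))^(p/2) = s^p := by
  rw [← Real.rpow_natCast s 2, ← Real.rpow_mul hs]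
  congr 1
  push_cast; ring

lemma two_rpow_ge {p : ℝ} (hp : 2 ≤ p) : p ≤ (2:ℝ)^p := by
  have hlog : (0.6931:ℝ) < Real.log 2 := by
    have := Real.log_two_gt_d9
    linarith
  have h1 : (1:ℝ) + (p-2)*Real.log 2 ≤ Real.exp ((p-2)*Real.log 2) := by
    have := Real.add_one_le_exp ((p-2)*Real.log 2)
    linarith
  have h2 : Real.exp ((p-2) * Real.log 2) = (2:ℝ)^(p-2) := by
    rw [Real.rpow_def_of_pos (by norm_num : (0:ℝ) < 2)]
    ring_nf
  have h3 : (2:ℝ)^p = (2:ℝ)^(p-2) * (2:ℝ)^(2:ℕ) := by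
    rw [← Real.rpow_natCast (2:ℝ) 2, ← Real.rpow_add (by norm_num : (0:ℝ) < 2)]
    congr 1; push_cast; ring
  have h4 : (1:ℝ) + (p-2)*Real.log 2 ≤ (2:ℝ)^(p-2) := by rw [← h2]; exact h1
  have h5 : (0:ℝ) ≤ (p-2) := by linarith
  have h6 : (0:ℝ) ≤ (p-2)*Real.log 2 := by nlinarith
  rw [h3]
  nlinarith [h4, h5, hlog, mul_le_mul_of_nonneg_left hlog.le h5]

lemma one_add_rpow_ge {u m : ℝ} (hu : 1 ≤ u) (hm : 1 ≤ m) : 1 + u^m ≤ (1+u)^m := by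
  have hu0 : (0:ℝ) < u := by linarith
  have h1 : (1+u)^(m-1) * (1+u) = (1+u)^m := by
    have h := Real.rpow_add (show (0:ℝ) < 1+u by linarith) (m-1) 1
    rw [Real.rpow_one] at h
    rw [← h]; congr 1; ring
  have h2 : u^(m-1) ≤ (1+u)^(m-1) :=
    Real.rpow_le_rpow hu0.le (by linarith) (by linarith)
  have h3 : u^(m-1) * u = u^m := by
    have h := Real.rpow_add hu0 (m-1) 1
    rw [Real.rpow_one] at h
    rw [← h]; congr 1; ring
  have h4 : (1:ℝ) ≤ u^(m-1) := by
    have := Real.rpow_le_rpow (by norm_num : (0:ℝ) ≤ 1) hu (by linarith : (0:ℝ) ≤ m-1)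
    rwa [Real.one_rpow] at this
  have h5 : u^(m-1) * (1+u) ≤ (1+u)^(m-1) * (1+u) :=
    mul_le_mul_of_nonneg_right h2 (by linarith)
  have h6 : u^(m-1) * (1+u) = u^(m-1) + u^m := by rw [mul_add, mul_one, h3]
  rw [← h1]
  linarith [h5, h6, h4]

lemma midpoint_rpow {u m : ℝ} (hu : 0 ≤ u) (hm : 2 ≤ m) :
    1 + m*(u/2)*(1+u/2)^(m-1) ≤ (1+u)^m := by
  rcases eq_or_lt_of_le hu with rfl | hu0
  · simp
  have hm1 : (1:ℝ) ≤ m := by linarith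
  have hd : ∀ x : ℝ, HasDerivAt (fun x : ℝ => (1+x)^m) (1 * m * (1+x)^(m-1)) x := by
    intro x
    exact ((hasDerivAt_id x).const_add 1).rpow_const (Or.inr hm1)
  have hlt : u/2 < u := by linarith
  obtain ⟨c, hc, hceq⟩ := exists_hasDerivAt_eq_slope (fun x : ℝ => (1+x)^m)
    (fun x => 1 * m * (1+x)^(m-1)) hlt
    (fun x _ => (hd x).differentiableAt.continuousAt.continuousWithinAt)
    (fun x _ => hd x)
  have hne : u - u/2 ≠ 0 := by intro h; linarith
  rw [eq_div_iff hne] at hceq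
  have hstep : (1+u)^m - (1+u/2)^m = m * (1+c)^(m-1) * (u - u/2) := by
    rw [← hceq]; ring
  have hcb : (1+u/2)^(m-1) ≤ (1+c)^(m-1) :=
    Real.rpow_le_rpow (by linarith [hc.1]) (by linarith [hc.1]) (by linarith)
  have hbase : (1:ℝ) ≤ (1+u/2)^m := by
    have := Real.rpow_le_rpow (by norm_num : (0:ℝ) ≤ 1) (by linarith : (1:ℝ) ≤ 1+u/2)
      (by linarith : (0:ℝ) ≤ m)
    rwa [Real.one_rpow] at this
  have h1 : m * (1+u/2)^(m-1) * (u - u/2) ≤ m * (1+c)^(m-1) * (u - u/2) := by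
    have h := mul_le_mul_of_nonneg_left hcb (by linarith : (0:ℝ) ≤ m)
    exact mul_le_mul_of_nonneg_right h (by linarith)
  nlinarith [hstep, h1, hbase]

set_option maxHeartbeats 1000000 in
/-- The normalized core inequality. -/
lemma normIneq {p t : ℝ} (hp : 2 ≤ p) (ht : 0 ≤ t) :
    1 + (p*(p-1)/2) * (1+t)^(p-2) * t^(2:ℕ) ≤ (1 + 4*(p-1)*t^(2:ℕ))^(p/2) := by
  have hp1 : (1:ℝ) ≤ p - 1 := by linarith
  have hA : (0:ℝ) ≤ p*(p-1)/2 := by nlinarith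
  have ht2 : (0:ℝ) ≤ t^(2:ℕ) := by positivity
  have hu : (0:ℝ) ≤ 4*(p-1)*t^(2:ℕ) := by nlinarith
  by_cases hcase : (1+t)^(p-2) ≤ 4
  · have hB := one_add_mul_self_le_rpow_one_add
      (show (-1:ℝ) ≤ 4*(p-1)*t^(2:ℕ) by linarith) (show (1:ℝ) ≤ p/2 by linarith)
    have hL : (p*(p-1)/2) * (1+t)^(p-2) * t^(2:ℕ) ≤ p/2 * (4*(p-1)*t^(2:ℕ)) := by
      have h1 := mul_le_mul_of_nonneg_left hcase hA
      have h2 := mul_le_mul_of_nonneg_right h1 ht2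
      nlinarith [h2]
    linarith [hB, hL]
  · push_neg at hcase
    by_cases hp4 : p ≤ 4
    · -- case 2 ≤ p ≤ 4, t > 1
      have h1t0 : (1:ℝ) ≤ 1 + t := by linarith
      have he : (1+t)^(p-2) ≤ (1+t)^((2:ℕ):ℝ) :=
        Real.rpow_le_rpow_of_exponent_le h1t0 (by push_cast; linarith)
      have he2 : (1+t)^((2:ℕ):ℝ) = (1+t)^(2:ℕ) := Real.rpow_natCast _ 2
      have ht1 : 1 < t := by nlinarith [hcase, he, he2]
      have ht0 : (0:ℝ) < t := by linarith
      have hu1 : (1:ℝ) ≤ 4*(p-1)*t^(2:ℕ) := by nlinarith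
      have hkey := one_add_rpow_ge hu1 (show (1:ℝ) ≤ p/2 by linarith)
      have hc : (4*(p-1)*t^(2:ℕ))^(p/2) = (4*(p-1))^(p/2) * t^p := by
        rw [Real.mul_rpow (by nlinarith : (0:ℝ) ≤ 4*(p-1)) ht2, sq_rpow_half ht]
      have hc2 : (4*(p-1))^(p/2) = (2:ℝ)^p * (p-1)^(p/2) := by
        rw [Real.mul_rpow (by norm_num : (0:ℝ) ≤ 4) (by linarith : (0:ℝ) ≤ p-1)]
        congr 1
        rw [show (4:ℝ) = (2:ℝ)^(2:ℕ) by norm_num, sq_rpow_half (by norm_num : (0:ℝ) ≤ 2)]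
      have hq : (p-1) ≤ (p-1)^(p/2) := by
        have := Real.rpow_le_rpow_of_exponent_le hp1 (show (1:ℝ) ≤ p/2 by linarith)
        rwa [Real.rpow_one] at this
      have h2t : (1+t) ≤ 2*t := by linarith
      have hstep : (1+t)^(p-2) ≤ (2:ℝ)^(p-2) * t^(p-2) := by
        have := Real.rpow_le_rpow (by linarith) h2t (by linarith : (0:ℝ) ≤ p-2)
        rwa [Real.mul_rpow (by norm_num) (by linarith)] at this
      have htp : t^(p-2) * t^(2:ℕ) = t^p := rpow_sub_two_mul_sq ht0.le (by positivity)
      have hE : (0:ℝ) < (2:ℝ)^(p-2) := Real.rpow_pos_of_pos (by norm_num) _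
      have h2p2 : (2:ℝ)^p = (2:ℝ)^(p-2) * 4 := by
        rw [show (4:ℝ) = (2:ℝ)^((2:ℕ):ℝ) by rw [Real.rpow_natCast]; norm_num,
          ← Real.rpow_add (by norm_num : (0:ℝ) < 2)]
        congr 1; push_cast; ring
      have hcoef : (p*(p-1)/2) * (2:ℝ)^(p-2) ≤ (2:ℝ)^p * (p-1)^(p/2) := by
        rw [h2p2]
        have ha : p*(p-1)/2 ≤ 4*(p-1) := by nlinarith
        have hb1 := mul_le_mul_of_nonneg_right ha hE.le
        have hb2 := mul_le_mul_of_nonneg_left hq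
          (show (0:ℝ) ≤ 4*(2:ℝ)^(p-2) by positivity)
        nlinarith [hb1, hb2]
      have htpnn : (0:ℝ) ≤ t^p := Real.rpow_nonneg ht0.le _
      have hL : (p*(p-1)/2) * (1+t)^(p-2) * t^(2:ℕ) ≤ (4*(p-1)*t^(2:ℕ))^(p/2) := by
        have h1 : (p*(p-1)/2) * (1+t)^(p-2) * t^(2:ℕ)
            ≤ (p*(p-1)/2) * ((2:ℝ)^(p-2) * t^(p-2)) * t^(2:ℕ) := by
          have := mul_le_mul_of_nonneg_left hstep hA
          exact mul_le_mul_of_nonneg_right this ht2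
        have h2 : (p*(p-1)/2) * ((2:ℝ)^(p-2) * t^(p-2)) * t^(2:ℕ)
            = ((p*(p-1)/2) * (2:ℝ)^(p-2)) * (t^(p-2) * t^(2:ℕ)) := by ring
        have h3 : ((p*(p-1)/2) * (2:ℝ)^(p-2)) * (t^(p-2) * t^(2:ℕ))
            ≤ ((2:ℝ)^p * (p-1)^(p/2)) * t^p := by
          rw [htp]
          exact mul_le_mul_of_nonneg_right hcoef htpnn
        rw [hc, hc2]
        linarith [h1, h3, h2.le, h2.ge]
      linarith [hkey, hL]
    · -- case p > 4
      push_neg at hp4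
      have hmid := midpoint_rpow hu (show (2:ℝ) ≤ p/2 by linarith)
      have hp2 : (0:ℝ) < p - 2 := by linarith
      have hpoly : (p-2)*((1+t)^(2:ℕ)) ≤ (p-1)*(1+2*(p-1)*t^(2:ℕ)) := by
        nlinarith [sq_nonneg (1-(p-2)*t),
          mul_nonneg (mul_nonneg (show (0:ℝ) ≤ p by linarith)
            (show (0:ℝ) ≤ p-1 by linarith)) ht2]
      have hXnn : (0:ℝ) ≤ 1+2*(p-1)*t^(2:ℕ) := by nlinarith
      have hdiv : (1+t)^(2:ℕ) ≤ ((p-1)/(p-2))*(1+2*(p-1)*t^(2:ℕ)) := by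
        rw [div_mul_eq_mul_div, le_div_iff₀ hp2]
        linarith [hpoly]
      have hpow : (1+t)^(p-2) = ((1+t)^(2:ℕ))^((p-2)/2) := by
        rw [← Real.rpow_natCast (1+t) 2, ← Real.rpow_mul (by linarith : (0:ℝ) ≤ 1+t)]
        congr 1; push_cast; ring
      have hmono : ((1+t)^(2:ℕ))^((p-2)/2) ≤ (((p-1)/(p-2))*(1+2*(p-1)*t^(2:ℕ)))^((p-2)/2) :=
        Real.rpow_le_rpow (by positivity) hdiv (by linarith)
      have hsplit : (((p-1)/(p-2))*(1+2*(p-1)*t^(2:ℕ)))^((p-2)/2)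
          = ((p-1)/(p-2))^((p-2)/2) * (1+2*(p-1)*t^(2:ℕ))^((p-2)/2) :=
        Real.mul_rpow (by positivity) hXnn
      have hDle2 : ((p-1)/(p-2))^((p-2)/2) ≤ 2 := by
        have hd : (p-1)/(p-2) = 1 + 1/(p-2) := by field_simp; ring
        have hexp : 1 + 1/(p-2) ≤ Real.exp (1/(p-2)) := by
          have := Real.add_one_le_exp (1/(p-2)); linarith
        have h1 : ((p-1)/(p-2))^((p-2)/2) ≤ (Real.exp (1/(p-2)))^((p-2)/2) := by
          rw [hd]; exact Real.rpow_le_rpow (by positivity) hexp (by linarith)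
        have h2 : (Real.exp (1/(p-2)))^((p-2)/2) = Real.exp ((1/(p-2))*((p-2)/2)) := by
          rw [Real.exp_mul]
        have h3 : (1/(p-2))*((p-2)/2) = 1/2 := by field_simp
        have h4 : Real.exp ((1:ℝ)/2) ≤ 2 := by
          have h5 : Real.exp ((1:ℝ)/2) ≤ Real.exp (Real.log 2) := by
            apply Real.exp_le_exp.mpr
            have := Real.log_two_gt_d9; linarith
          rwa [Real.exp_log (by norm_num : (0:ℝ) < 2)] at h5
        rw [h3] at h2
        linarith [h1, h2.le, h2.ge, h4]
      have hXp : (0:ℝ) ≤ (1+2*(p-1)*t^(2:ℕ))^((p-2)/2) := Real.rpow_nonneg hXnn _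
      have hfinkey : (1+t)^(p-2) ≤ 2*(1+2*(p-1)*t^(2:ℕ))^((p-2)/2) := by
        calc (1+t)^(p-2) = ((1+t)^(2:ℕ))^((p-2)/2) := hpow
          _ ≤ (((p-1)/(p-2))*(1+2*(p-1)*t^(2:ℕ)))^((p-2)/2) := hmono
          _ = ((p-1)/(p-2))^((p-2)/2) * (1+2*(p-1)*t^(2:ℕ))^((p-2)/2) := hsplit
          _ ≤ 2 * (1+2*(p-1)*t^(2:ℕ))^((p-2)/2) := mul_le_mul_of_nonneg_right hDle2 hXp
      have harr : (p/2)*((4*(p-1)*t^(2:ℕ))/2)*(1+(4*(p-1)*t^(2:ℕ))/2)^(p/2-1)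
          = p*(p-1)*t^(2:ℕ)*(1+2*(p-1)*t^(2:ℕ))^((p-2)/2) := by
        have e1 : p/2 - 1 = (p-2)/2 := by ring
        have e2 : (4*(p-1)*t^(2:ℕ))/2 = 2*(p-1)*t^(2:ℕ) := by ring
        rw [e1, e2]; ring
      have hL : (p*(p-1)/2)*(1+t)^(p-2)*t^(2:ℕ)
          ≤ p*(p-1)*t^(2:ℕ)*(1+2*(p-1)*t^(2:ℕ))^((p-2)/2) := by
        have h1 := mul_le_mul_of_nonneg_left hfinkey hA
        have h2 := mul_le_mul_of_nonneg_right h1 ht2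
        calc (p*(p-1)/2)*(1+t)^(p-2)*t^(2:ℕ)
            = p*(p-1)/2 * (1+t)^(p-2) * t^(2:ℕ) := by ring
          _ ≤ p*(p-1)/2 * (2*(1+2*(p-1)*t^(2:ℕ))^((p-2)/2)) * t^(2:ℕ) := h2
          _ = p*(p-1)*t^(2:ℕ)*(1+2*(p-1)*t^(2:ℕ))^((p-2)/2) := by ring
      calc 1 + (p*(p-1)/2) * (1+t)^(p-2) * t^(2:ℕ)
          ≤ 1 + p*(p-1)*t^(2:ℕ)*(1+2*(p-1)*t^(2:ℕ))^((p-2)/2) := by linarith [hL]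
        _ = 1 + (p/2)*((4*(p-1)*t^(2:ℕ))/2)*(1+(4*(p-1)*t^(2:ℕ))/2)^(p/2-1) := by rw [harr]
        _ ≤ (1 + 4*(p-1)*t^(2:ℕ))^(p/2) := hmid

/-- Scalar step: `s^p + (p(p-1)/2)(s+b)^(p-2) b² ≤ (s² + 4(p-1) b²)^(p/2)`. -/
lemma scalarL5 {p s b : ℝ} (hp : 2 ≤ p) (hs : 0 ≤ s) (hb : 0 ≤ b) :
    s^p + (p*(p-1)/2) * (s+b)^(p-2) * b^(2:ℕ)
      ≤ (s^(2:ℕ) + 4*(p-1)*b^(2:ℕ))^(p/2) := by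
  have hp0 : (0:ℝ) < p := by linarith
  have hA : (0:ℝ) ≤ p*(p-1)/2 := by nlinarith
  rcases eq_or_lt_of_le hs with rfl | hs0
  · -- s = 0
    rw [Real.zero_rpow hp0.ne']
    have h1 : (0+b)^(p-2) * b^(2:ℕ) = b^p := by rw [zero_add]; exact rpow_sub_two_mul_sq hb hp0.ne'
    have h2 : ((0:ℝ)^(2:ℕ) + 4*(p-1)*b^(2:ℕ))^(p/2) = (4*(p-1))^(p/2) * b^p := by
      rw [show ((0:ℝ)^(2:ℕ) + 4*(p-1)*b^(2:ℕ)) = (4*(p-1))*b^(2:ℕ) by ring,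
        Real.mul_rpow (by nlinarith) (by positivity), sq_rpow_half hb]
    rw [h2]
    have hApow : p*(p-1)/2 ≤ (4*(p-1))^(p/2) := by
      have hc2 : (4*(p-1))^(p/2) = (2:ℝ)^p * (p-1)^(p/2) := by
        rw [Real.mul_rpow (by norm_num : (0:ℝ) ≤ 4) (by linarith : (0:ℝ) ≤ p-1)]
        congr 1
        rw [show (4:ℝ) = (2:ℝ)^(2:ℕ) by norm_num, sq_rpow_half (by norm_num : (0:ℝ) ≤ 2)]
      have hq : (p-1) ≤ (p-1)^(p/2) := by
        have := Real.rpow_le_rpow_of_exponent_le (by linarith : (1:ℝ) ≤ p-1)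
          (show (1:ℝ) ≤ p/2 by linarith)
        rwa [Real.rpow_one] at this
      have h2p : p ≤ (2:ℝ)^p := two_rpow_ge hp
      rw [hc2]
      nlinarith [mul_le_mul_of_nonneg_left hq (Real.rpow_nonneg (by norm_num : (0:ℝ) ≤ 2) p),
        h2p, hq]
    have hbp : (0:ℝ) ≤ b^p := Real.rpow_nonneg hb _
    calc 0 + p*(p-1)/2 * (0+b)^(p-2) * b^(2:ℕ)
        = p*(p-1)/2 * ((0+b)^(p-2) * b^(2:ℕ)) := by ring
      _ = p*(p-1)/2 * b^p := by rw [h1]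
      _ ≤ (4*(p-1))^(p/2) * b^p := mul_le_mul_of_nonneg_right hApow hbp
  · rcases eq_or_lt_of_le hb with rfl | hb0
    · -- b = 0
      simp only [pow_two, mul_zero, zero_mul, add_zero, mul_zero]
      rw [← sq_rpow_half hs0.le]
      simp [pow_two]
    · -- s, b > 0 : scale the normalized inequality by s^p
      set t := b / s with htdef
      have ht0 : 0 < t := div_pos hb0 hs0
      have hN := normIneq hp ht0.le
      have hsp : (0:ℝ) < s^p := Real.rpow_pos_of_pos hs0 _
      -- multiply through by s^p
      have key : s^p * (1 + (p*(p-1)/2) * (1+t)^(p-2) * t^(2:ℕ))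
          ≤ s^p * ((1 + 4*(p-1)*t^(2:ℕ))^(p/2)) :=
        mul_le_mul_of_nonneg_left hN hsp.le
      -- LHS identification
      have hsplit : s^p = s^(p-2) * s^(2:ℕ) := (rpow_sub_two_mul_sq hs0.le hp0.ne').symm
      have hbt : b = s * t := by rw [htdef]; field_simp
      have hL : s^p * (1 + (p*(p-1)/2) * (1+t)^(p-2) * t^(2:ℕ))
          = s^p + (p*(p-1)/2) * (s+b)^(p-2) * b^(2:ℕ) := by
        have h1 : (s+b)^(p-2) = s^(p-2) * (1+t)^(p-2) := by
          rw [show s+b = s*(1+t) by rw [hbt]; ring,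
            Real.mul_rpow hs0.le (by linarith : (0:ℝ) ≤ 1+t)]
        have h2 : b^(2:ℕ) = s^(2:ℕ) * t^(2:ℕ) := by rw [hbt]; ring
        rw [h1, h2, hsplit]
        ring
      have hR : s^p * ((1 + 4*(p-1)*t^(2:ℕ))^(p/2))
          = (s^(2:ℕ) + 4*(p-1)*b^(2:ℕ))^(p/2) := by
        have h3 : s^p = (s^(2:ℕ))^(p/2) := (sq_rpow_half hs0.le).symm
        have h4 : (0:ℝ) ≤ 1 + 4*(p-1)*t^(2:ℕ) := by nlinarith [sq_nonneg t]
        rw [h3, ← Real.mul_rpow (by positivity) h4]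
        congr 1
        have h2 : b^(2:ℕ) = s^(2:ℕ) * t^(2:ℕ) := by rw [hbt]; ring
        rw [h2]; ring
      rw [hL, hR] at key
      exact key


section LemA
variable {ι : Type*} [Fintype ι]

lemma lemA0 {p : ℝ} (hp : 2 ≤ p)
    (w Y : ι → ℝ) (hw0 : ∀ i, 0 ≤ w i) (hw1 : ∑ i, w i = 1)
    (hY : ∑ i, w i * Y i = 0) {s : ℝ} (hs : 0 ≤ s) :
    ∑ i, w i * |s + Y i| ^ p ≤
      (s^(2:ℕ) + 4*(p-1) * (∑ i, w i * |Y i| ^ p) ^ ((2:ℝ)/p)) ^ (p/2) := by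
  have hp0 : (0:ℝ) < p := by linarith
  have hp2 : (0:ℝ) ≤ p - 2 := by linarith
  have hA : (0:ℝ) ≤ p*(p-1)/2 := by nlinarith
  set W : ℝ := ∑ i, w i * |Y i| ^ p with hWdef
  have hW0 : 0 ≤ W := Finset.sum_nonneg fun i _ =>
    mul_nonneg (hw0 i) (Real.rpow_nonneg (abs_nonneg _) _)
  set b : ℝ := W ^ (1/p) with hbdef
  have hb0 : 0 ≤ b := Real.rpow_nonneg hW0 _
  have hb2 : W ^ ((2:ℝ)/p) = b^(2:ℕ) := by
    rw [hbdef, ← Real.rpow_natCast (W ^ (1/p)) 2, ← Real.rpow_mul hW0]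
    congr 1
    push_cast; field_simp
  -- Step 1 : pointwise star' and mean-zero
  set T : ℝ := ∑ i, w i * ((s + |Y i|)^(p-2) * (Y i)^(2:ℕ)) with hTdef
  have step1 : ∑ i, w i * |s + Y i| ^ p ≤ s^p + (p*(p-1)/2) * T := by
    have h1 : ∑ i, w i * |s + Y i| ^ p ≤
        ∑ i, w i * (s^p + p*s^(p-1)*(Y i) + (p*(p-1)/2)*(s+|Y i|)^(p-2)*(Y i)^(2:ℕ)) :=
      Finset.sum_le_sum fun i _ => mul_le_mul_of_nonneg_left (star' hp hs (Y i)) (hw0 i)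
    have h2 : ∑ i, w i * (s^p + p*s^(p-1)*(Y i) + (p*(p-1)/2)*(s+|Y i|)^(p-2)*(Y i)^(2:ℕ))
        = s^p * (∑ i, w i) + (p*s^(p-1)) * (∑ i, w i * Y i) + (p*(p-1)/2) * T := by
      rw [hTdef, Finset.mul_sum, Finset.mul_sum, Finset.mul_sum, ← Finset.sum_add_distrib,
        ← Finset.sum_add_distrib]
      exact Finset.sum_congr rfl fun i _ => by ring
    rw [h2, hw1, hY] at h1
    calc ∑ i, w i * |s + Y i| ^ p ≤ s^p * 1 + (p*s^(p-1)) * 0 + (p*(p-1)/2) * T := h1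
      _ = s^p + (p*(p-1)/2) * T := by ring
  -- Step 2 : Hölder
  set X : ℝ := ∑ i, w i * (s + |Y i|)^p with hXdef
  have hX0 : 0 ≤ X := Finset.sum_nonneg fun i _ =>
    mul_nonneg (hw0 i) (Real.rpow_nonneg (by positivity) _)
  have step2 : T ≤ X ^ ((p-2)/p) * W ^ ((2:ℝ)/p) := by
    rcases eq_or_lt_of_le hp with hp2' | hp2'
    · -- p = 2
      subst hp2'
      have e1 : T = ∑ i, w i * (Y i)^(2:ℕ) := by
        rw [hTdef]
        refine Finset.sum_congr rfl fun i _ => ?_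
        rw [show ((2:ℝ)-2) = 0 by ring, Real.rpow_zero, one_mul]
      have e2 : W = ∑ i, w i * (Y i)^(2:ℕ) := by
        rw [hWdef]
        refine Finset.sum_congr rfl fun i _ => ?_
        rw [show ((2):ℝ) = ((2:ℕ):ℝ) by norm_num, Real.rpow_natCast, sq_abs]
      rw [e1, ← e2]
      rw [show ((2:ℝ)-2)/2 = 0 by norm_num, Real.rpow_zero, one_mul,
        show (2:ℝ)/2 = 1 by norm_num, Real.rpow_one]
    · -- p > 2
      have hps : (0:ℝ) < p - 2 := by linarith
      have hpq : Real.HolderConjugate (p/(p-2)) (p/2) := by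
        rw [Real.holderConjugate_iff]
        constructor
        · rw [lt_div_iff₀ hps]; linarith
        · rw [inv_div, inv_div]; field_simp; ring
      have hf : ∀ i ∈ Finset.univ, 0 ≤ (w i)^((p-2)/p) * (s+|Y i|)^(p-2) :=
        fun i _ => mul_nonneg (Real.rpow_nonneg (hw0 i) _) (Real.rpow_nonneg (by positivity) _)
      have hg : ∀ i ∈ Finset.univ, 0 ≤ (w i)^((2:ℝ)/p) * (Y i)^(2:ℕ) :=
        fun i _ => mul_nonneg (Real.rpow_nonneg (hw0 i) _) (by positivity)
      have happ := Real.inner_le_Lp_mul_Lq_of_nonneg Finset.univ hpq hf hg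
      have efg : ∀ i, ((w i)^((p-2)/p) * (s+|Y i|)^(p-2)) * ((w i)^((2:ℝ)/p) * (Y i)^(2:ℕ))
          = w i * ((s + |Y i|)^(p-2) * (Y i)^(2:ℕ)) := by
        intro i
        have hsum : (p-2)/p + (2:ℝ)/p = 1 := by field_simp; ring
        have : (w i)^((p-2)/p) * (w i)^((2:ℝ)/p) = w i := by
          rw [← Real.rpow_add' (hw0 i) (by rw [hsum]; norm_num), hsum, Real.rpow_one]
        calc ((w i)^((p-2)/p) * (s+|Y i|)^(p-2)) * ((w i)^((2:ℝ)/p) * (Y i)^(2:ℕ))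
            = ((w i)^((p-2)/p) * (w i)^((2:ℝ)/p)) * ((s+|Y i|)^(p-2) * (Y i)^(2:ℕ)) := by ring
          _ = w i * ((s + |Y i|)^(p-2) * (Y i)^(2:ℕ)) := by rw [this]
      have ef : ∀ i, ((w i)^((p-2)/p) * (s+|Y i|)^(p-2))^(p/(p-2)) = w i * (s+|Y i|)^p := by
        intro i
        rw [Real.mul_rpow (Real.rpow_nonneg (hw0 i) _) (Real.rpow_nonneg (by positivity) _),
          ← Real.rpow_mul (hw0 i), ← Real.rpow_mul (by positivity : (0:ℝ) ≤ s + |Y i|)]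
        rw [show (p-2)/p * (p/(p-2)) = 1 by field_simp, Real.rpow_one,
          show (p-2) * (p/(p-2)) = p by field_simp]
      have eg : ∀ i, ((w i)^((2:ℝ)/p) * (Y i)^(2:ℕ))^(p/2) = w i * |Y i|^p := by
        intro i
        rw [show ((Y i):ℝ)^(2:ℕ) = |Y i|^(2:ℕ) by rw [sq_abs]]
        rw [Real.mul_rpow (Real.rpow_nonneg (hw0 i) _) (by positivity),
          ← Real.rpow_mul (hw0 i), sq_rpow_half (abs_nonneg _)]
        rw [show (2:ℝ)/p * (p/2) = 1 by field_simp, Real.rpow_one]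
      rw [Finset.sum_congr rfl (fun i _ => efg i)] at happ
      rw [Finset.sum_congr rfl (fun i _ => ef i)] at happ
      rw [Finset.sum_congr rfl (fun i _ => eg i)] at happ
      rw [show 1/(p/(p-2)) = (p-2)/p by rw [one_div_div],
        show 1/(p/2) = (2:ℝ)/p by rw [one_div_div]] at happ
      exact happ
  -- Step 3 : Minkowski
  have step3 : X ^ (1/p) ≤ s + b := by
    have hmink := Real.Lp_add_le Finset.univ (fun i => (w i)^(1/p) * s)
      (fun i => (w i)^(1/p) * |Y i|) (show (1:ℝ) ≤ p by linarith)
    beta_reduce at hmink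
    have e1 : ∀ i, abs ((w i)^(1/p) * s + (w i)^(1/p) * |Y i|)^p = w i * (s + |Y i|)^p := by
      intro i
      have hw' : 0 ≤ (w i)^(1/p) := Real.rpow_nonneg (hw0 i) _
      have hnn : 0 ≤ (w i)^(1/p) * s + (w i)^(1/p) * |Y i| :=
        add_nonneg (mul_nonneg hw' hs) (mul_nonneg hw' (abs_nonneg _))
      rw [abs_of_nonneg hnn, show (w i)^(1/p) * s + (w i)^(1/p) * |Y i|
          = (w i)^(1/p) * (s + |Y i|) by ring,
        Real.mul_rpow (Real.rpow_nonneg (hw0 i) _) (add_nonneg hs (abs_nonneg _)),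
        ← Real.rpow_mul (hw0 i), show 1/p * p = 1 by field_simp, Real.rpow_one]
    have e2 : ∀ i, |(w i)^(1/p) * s|^p = w i * s^p := by
      intro i
      rw [abs_of_nonneg (mul_nonneg (Real.rpow_nonneg (hw0 i) _) hs),
        Real.mul_rpow (Real.rpow_nonneg (hw0 i) _) hs,
        ← Real.rpow_mul (hw0 i), show 1/p * p = 1 by field_simp, Real.rpow_one]
    have e3 : ∀ i, abs ((w i)^(1/p) * |Y i|)^p = w i * |Y i|^p := by
      intro i
      rw [abs_of_nonneg (mul_nonneg (Real.rpow_nonneg (hw0 i) _) (abs_nonneg _)),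
        Real.mul_rpow (Real.rpow_nonneg (hw0 i) _) (abs_nonneg _),
        ← Real.rpow_mul (hw0 i), show 1/p * p = 1 by field_simp, Real.rpow_one]
    rw [Finset.sum_congr rfl (fun i _ => e1 i), Finset.sum_congr rfl (fun i _ => e2 i),
      Finset.sum_congr rfl (fun i _ => e3 i), ← Finset.sum_mul, hw1, one_mul] at hmink
    rw [show (s^p)^(1/p) = s by
      rw [one_div, Real.rpow_rpow_inv hs hp0.ne'] ] at hmink
    exact hmink
  -- Step 4
  have step4 : X ^ ((p-2)/p) ≤ (s+b)^(p-2) := by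
    rw [show (p-2)/p = 1/p * (p-2) by field_simp, Real.rpow_mul hX0]
    exact Real.rpow_le_rpow (Real.rpow_nonneg hX0 _) step3 hp2
  -- Combine
  have hT : T ≤ (s+b)^(p-2) * b^(2:ℕ) := by
    calc T ≤ X ^ ((p-2)/p) * W ^ ((2:ℝ)/p) := step2
      _ ≤ (s+b)^(p-2) * W ^ ((2:ℝ)/p) :=
        mul_le_mul_of_nonneg_right step4 (Real.rpow_nonneg hW0 _)
      _ = (s+b)^(p-2) * b^(2:ℕ) := by rw [hb2]
  calc ∑ i, w i * |s + Y i| ^ p ≤ s^p + (p*(p-1)/2) * T := step1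
    _ ≤ s^p + (p*(p-1)/2) * ((s+b)^(p-2) * b^(2:ℕ)) := by
        have := mul_le_mul_of_nonneg_left hT hA
        linarith
    _ = s^p + (p*(p-1)/2) * (s+b)^(p-2) * b^(2:ℕ) := by ring
    _ ≤ (s^(2:ℕ) + 4*(p-1)*b^(2:ℕ))^(p/2) := scalarL5 hp hs hb0
    _ = (s^(2:ℕ) + 4*(p-1) * W ^ ((2:ℝ)/p))^(p/2) := by rw [hb2]

lemma lemA {p : ℝ} (hp : 2 ≤ p)
    (w Y : ι → ℝ) (hw0 : ∀ i, 0 ≤ w i) (hw1 : ∑ i, w i = 1)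
    (hY : ∑ i, w i * Y i = 0) (s : ℝ) :
    ∑ i, w i * |s + Y i| ^ p ≤
      (s^(2:ℕ) + 4*(p-1) * (∑ i, w i * |Y i| ^ p) ^ ((2:ℝ)/p)) ^ (p/2) := by
  rcases le_or_gt 0 s with hs | hs
  · exact lemA0 hp w Y hw0 hw1 hY hs
  · have hY' : ∑ i, w i * (-Y) i = 0 := by
      simp only [Pi.neg_apply, mul_neg]
      rw [Finset.sum_neg_distrib, hY, neg_zero]
    have h := lemA0 hp w (-Y) hw0 hw1 hY' (show (0:ℝ) ≤ -s by linarith)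
    have e1 : ∀ i, w i * |(-s) + (-Y) i|^p = w i * |s + Y i|^p := by
      intro i
      simp only [Pi.neg_apply]
      rw [show -s + -Y i = -(s + Y i) by ring, abs_neg]
    have e2 : ∀ i, w i * |(-Y) i|^p = w i * |Y i|^p := by
      intro i
      simp only [Pi.neg_apply, abs_neg]
    rw [Finset.sum_congr rfl (fun i _ => e1 i), Finset.sum_congr rfl (fun i _ => e2 i),
      show ((-s):ℝ)^(2:ℕ) = s^(2:ℕ) by ring] at h
    exact h

end LemA


section LemR
variable {ι : Type*} [Fintype ι]

lemma sum_prod_weights (w : ι → ℝ) (m : ℕ) :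
    ∑ ω : Fin m → ι, (∏ t, w (ω t)) = (∑ i, w i)^m := by
  induction m with
  | zero => simp
  | succ m ih =>
    have h := Fintype.sum_equiv (Fin.consEquiv (fun _ : Fin (m+1) => ι))
      (fun x : ι × (Fin m → ι) => w x.1 * ∏ t, w (x.2 t))
      (fun ω : Fin (m+1) → ι => ∏ t, w (ω t))
      (by
        rintro ⟨i, ω⟩
        simp [Fin.consEquiv, Fin.prod_univ_succ])
    rw [← h, Fintype.sum_prod_type]
    simp only [← Finset.mul_sum]
    rw [← Finset.sum_mul]
    rw [ih, pow_succ]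
    ring

lemma lemR {p : ℝ} (hp : 2 ≤ p)
    (w Y : ι → ℝ) (hw0 : ∀ i, 0 ≤ w i) (hw1 : ∑ i, w i = 1)
    (hY : ∑ i, w i * Y i = 0) (m : ℕ) :
    ∑ ω : Fin m → ι, (∏ t, w (ω t)) * |∑ t, Y (ω t)| ^ p
      ≤ (4*(p-1) * (m:ℝ) * (∑ i, w i * |Y i| ^ p) ^ ((2:ℝ)/p)) ^ (p/2) := by
  have hp0 : (0:ℝ) < p := by linarith
  have hq1 : (1:ℝ) ≤ p/2 := by linarith
  set V : ℝ := ∑ i, w i * |Y i| ^ p with hVdef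
  have hV0 : 0 ≤ V := Finset.sum_nonneg fun i _ =>
    mul_nonneg (hw0 i) (Real.rpow_nonneg (abs_nonneg _) _)
  set B : ℝ := V ^ ((2:ℝ)/p) with hBdef
  have hB0 : 0 ≤ B := Real.rpow_nonneg hV0 _
  have hc0 : (0:ℝ) ≤ 4*(p-1) := by linarith
  induction m with
  | zero =>
    simp only [Nat.cast_zero, mul_zero, zero_mul]
    rw [Real.zero_rpow (by positivity : p/2 ≠ 0)]
    simp [Real.zero_rpow hp0.ne']
  | succ m ih =>
    -- decompose the sum
    have hsum : ∑ ω : Fin (m+1) → ι, (∏ t, w (ω t)) * |∑ t, Y (ω t)| ^ p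
        = ∑ ω : Fin m → ι, (∏ t, w (ω t)) *
            (∑ i, w i * |(∑ t, Y (ω t)) + Y i| ^ p) := by
      have h := Fintype.sum_equiv (Fin.consEquiv (fun _ : Fin (m+1) => ι))
        (fun x : ι × (Fin m → ι) =>
          (w x.1 * ∏ t, w (x.2 t)) * |Y x.1 + ∑ t, Y (x.2 t)| ^ p)
        (fun ω : Fin (m+1) → ι => (∏ t, w (ω t)) * |∑ t, Y (ω t)| ^ p)
        (by
          rintro ⟨i, ω⟩
          simp [Fin.consEquiv, Fin.prod_univ_succ, Fin.sum_univ_succ])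
      rw [← h, Fintype.sum_prod_type]
      rw [Finset.sum_comm]
      refine Finset.sum_congr rfl fun ω _ => ?_
      rw [Finset.mul_sum]
      refine Finset.sum_congr rfl fun i _ => ?_
      rw [add_comm (Y i) (∑ t, Y (ω t))]
      ring
    rw [hsum]
    -- apply lemA pointwise
    set S : (Fin m → ι) → ℝ := fun ω => ∑ t, Y (ω t) with hSdef
    set Wt : (Fin m → ι) → ℝ := fun ω => ∏ t, w (ω t) with hWtdef
    have hWt0 : ∀ ω, 0 ≤ Wt ω := fun ω => Finset.prod_nonneg fun t _ => hw0 _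
    have hWt1 : ∑ ω : Fin m → ι, Wt ω = 1 := by
      rw [hWtdef]; simp only []; rw [sum_prod_weights w m, hw1, one_pow]
    have h1 : ∑ ω : Fin m → ι, Wt ω * (∑ i, w i * |S ω + Y i| ^ p)
        ≤ ∑ ω : Fin m → ι, Wt ω * ((S ω)^(2:ℕ) + 4*(p-1) * B) ^ (p/2) :=
      Finset.sum_le_sum fun ω _ => mul_le_mul_of_nonneg_left
        (lemA hp w Y hw0 hw1 hY (S ω)) (hWt0 ω)
    -- Minkowski in L^{p/2}
    have hcB : (0:ℝ) ≤ 4*(p-1)*B := mul_nonneg hc0 hB0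
    have hmink := Real.Lp_add_le Finset.univ
      (fun ω : Fin m → ι => (Wt ω)^((2:ℝ)/p) * (S ω)^(2:ℕ))
      (fun ω : Fin m → ι => (Wt ω)^((2:ℝ)/p) * (4*(p-1)*B)) hq1
    beta_reduce at hmink
    have hww : ∀ ω : Fin m → ι, ((Wt ω)^((2:ℝ)/p))^(p/2) = Wt ω := by
      intro ω
      rw [← Real.rpow_mul (hWt0 ω), show (2:ℝ)/p * (p/2) = 1 by field_simp, Real.rpow_one]
    have e_fg : ∀ ω : Fin m → ι,
        |(Wt ω)^((2:ℝ)/p) * (S ω)^(2:ℕ) + (Wt ω)^((2:ℝ)/p) * (4*(p-1)*B)|^(p/2)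
          = Wt ω * ((S ω)^(2:ℕ) + 4*(p-1)*B)^(p/2) := by
      intro ω
      have hwp : 0 ≤ (Wt ω)^((2:ℝ)/p) := Real.rpow_nonneg (hWt0 ω) _
      have hXnn : 0 ≤ (S ω)^(2:ℕ) + 4*(p-1)*B := add_nonneg (sq_nonneg _) hcB
      rw [show (Wt ω)^((2:ℝ)/p) * (S ω)^(2:ℕ) + (Wt ω)^((2:ℝ)/p)*(4*(p-1)*B)
          = (Wt ω)^((2:ℝ)/p) * ((S ω)^(2:ℕ) + 4*(p-1)*B) by ring,
        abs_of_nonneg (mul_nonneg hwp hXnn),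
        Real.mul_rpow hwp hXnn, hww ω]
    have e_f : ∀ ω : Fin m → ι, |(Wt ω)^((2:ℝ)/p) * (S ω)^(2:ℕ)|^(p/2)
        = Wt ω * |S ω|^p := by
      intro ω
      have hwp : 0 ≤ (Wt ω)^((2:ℝ)/p) := Real.rpow_nonneg (hWt0 ω) _
      rw [abs_of_nonneg (mul_nonneg hwp (sq_nonneg _)),
        Real.mul_rpow hwp (sq_nonneg _), hww ω,
        show (S ω)^(2:ℕ) = |S ω|^(2:ℕ) by rw [sq_abs], sq_rpow_half (abs_nonneg _)]
    have e_g : ∀ ω : Fin m → ι, |(Wt ω)^((2:ℝ)/p) * (4*(p-1)*B)|^(p/2)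
        = Wt ω * ((4*(p-1)*B)^(p/2)) := by
      intro ω
      have hwp : 0 ≤ (Wt ω)^((2:ℝ)/p) := Real.rpow_nonneg (hWt0 ω) _
      rw [abs_of_nonneg (mul_nonneg hwp hcB), Real.mul_rpow hwp hcB, hww ω]
    rw [Finset.sum_congr rfl (fun ω _ => e_fg ω), Finset.sum_congr rfl (fun ω _ => e_f ω),
      Finset.sum_congr rfl (fun ω _ => e_g ω), ← Finset.sum_mul, hWt1, one_mul,
      show 1/(p/2) = (2:ℝ)/p by rw [one_div_div],
      show ((4*(p-1)*B)^(p/2))^((2:ℝ)/p)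
        = 4*(p-1)*B by rw [← Real.rpow_mul hcB, show p/2 * ((2:ℝ)/p) = 1 by field_simp,
          Real.rpow_one]] at hmink
    -- names
    set Z : ℝ := ∑ ω : Fin m → ι, Wt ω * ((S ω)^(2:ℕ) + 4*(p-1)*B)^(p/2) with hZdef
    set N : ℝ := ∑ ω : Fin m → ι, Wt ω * |S ω|^p with hNdef
    have hZnn : 0 ≤ Z := Finset.sum_nonneg fun ω _ =>
      mul_nonneg (hWt0 ω) (Real.rpow_nonneg (add_nonneg (sq_nonneg _) hcB) _)
    have hNnn : 0 ≤ N := Finset.sum_nonneg fun ω _ =>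
      mul_nonneg (hWt0 ω) (Real.rpow_nonneg (abs_nonneg _) _)
    have hcmB : (0:ℝ) ≤ 4*(p-1)*(m:ℝ)*B :=
      mul_nonneg (mul_nonneg hc0 (Nat.cast_nonneg m)) hB0
    have hNle : N ^ ((2:ℝ)/p) ≤ 4*(p-1)*(m:ℝ)*B := by
      have h := Real.rpow_le_rpow hNnn ih (by positivity : (0:ℝ) ≤ (2:ℝ)/p)
      rwa [← Real.rpow_mul hcmB, show p/2 * ((2:ℝ)/p) = 1 by field_simp,
        Real.rpow_one] at h
    have hZle : Z ≤ (4*(p-1)*(m:ℝ)*B + 4*(p-1)*B)^(p/2) := by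
      have h2 : Z^((2:ℝ)/p) ≤ 4*(p-1)*(m:ℝ)*B + 4*(p-1)*B :=
        le_trans hmink (add_le_add_left hNle _)
      have h3 := Real.rpow_le_rpow (Real.rpow_nonneg hZnn _) h2
        (by positivity : (0:ℝ) ≤ p/2)
      rwa [← Real.rpow_mul hZnn, show (2:ℝ)/p * (p/2) = 1 by field_simp,
        Real.rpow_one] at h3
    have hfin : ∑ ω : Fin m → ι, Wt ω * (∑ i, w i * |S ω + Y i| ^ p)
        ≤ (4*(p-1)*((m:ℝ)+1)*B)^(p/2) := by
      refine le_trans h1 (le_trans hZle ?_)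
      have : 4*(p-1)*(m:ℝ)*B + 4*(p-1)*B = 4*(p-1)*((m:ℝ)+1)*B := by ring
      rw [this]
    have hcast : ((m+1 : ℕ):ℝ) = (m:ℝ) + 1 := by push_cast; ring
    rw [hcast]
    exact hfin
end LemR


lemma exists_le_weighted {κ : Type*} [Fintype κ] (W F : κ → ℝ) (hW0 : ∀ i, 0 ≤ W i)
    (hW1 : ∑ i, W i = 1) {A : ℝ} (h : ∑ i, W i * F i ≤ A) : ∃ i, F i ≤ A := by
  by_contra hcon
  push_neg at hcon
  obtain ⟨j, hj⟩ : ∃ j, 0 < W j := by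
    by_contra h'
    push_neg at h'
    have h0 : ∑ i, W i = 0 := Finset.sum_eq_zero fun i _ => le_antisymm (h' i) (hW0 i)
    rw [h0] at hW1; norm_num at hW1
  have hlt : ∑ i, W i * A < ∑ i, W i * F i := by
    apply Finset.sum_lt_sum
    · exact fun i _ => mul_le_mul_of_nonneg_left (hcon i).le (hW0 i)
    · exact ⟨j, Finset.mem_univ j, mul_lt_mul_of_pos_left (hcon j) hj⟩
  rw [← Finset.sum_mul, hW1, one_mul] at hlt
  linarith

lemma abs_rpow_le_sq {a p : ℝ} (hp : 2 ≤ p) (ha : |a| ≤ 1) : |a|^p ≤ a^(2:ℕ) := by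
  rcases eq_or_ne a 0 with rfl | h
  · rw [abs_zero, Real.zero_rpow (by linarith : p ≠ 0)]
    positivity
  · have h1 : |a|^p ≤ |a|^((2:ℕ):ℝ) :=
      Real.rpow_le_rpow_of_exponent_ge (abs_pos.mpr h) ha (by push_cast; linarith)
    rwa [Real.rpow_natCast, sq_abs] at h1



/-- The ℓ_p norm of a finite-dimensional real vector, for real `p ≥ 1`. -/
noncomputable def lpNorm {ι : Type*} [Fintype ι] (p : ℝ) (x : ι → ℝ) : ℝ :=
  (∑ j, |x j| ^ p) ^ (1 / p)

/-- **Fast rounding in the matroid base polytope** (Proposition 5.1 of the paper):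
any point `x*` of the base polytope of a matroid of rank `r` is within `ε` in ℓ_p norm
of the average of at most `⌈4(p-1)·r^{2/p}/ε²⌉` base indicator vectors, i.e. there is a
sparsely supported distribution over bases whose expectation approximates `x*`. -/


theorem matroid_base_rounding
    (α : Type) [Fintype α] [DecidableEq α]
    (M : Matroid α) (hground : M.E = Set.univ)
    (r : ℕ) (hr : 1 ≤ r) (hrank : ∀ B, M.IsBase B → B.ncard = r)
    (x : α → ℝ)
    (hx : x ∈ convexHull ℝ
      {v : α → ℝ | ∃ B, M.IsBase B ∧ v = fun e => if e ∈ B then (1 : ℝ) else 0})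
    (p : ℝ) (hp : 2 ≤ p) (ε : ℝ) (hε : 0 < ε) :
    ∃ k : ℕ, 0 < k ∧ k ≤ ⌈4 * (p - 1) * (r : ℝ) ^ ((2 : ℝ) / p) / ε ^ 2⌉₊ ∧
      ∃ B : Fin k → Set α, (∀ t, M.IsBase (B t)) ∧
        lpNorm p (fun e : α =>
          (1 / (k : ℝ)) * (∑ t, if e ∈ B t then (1 : ℝ) else 0) - x e) ≤ ε := by
  classical
  have hp0 : (0:ℝ) < p := by linarith
  have hp1 : (1:ℝ) ≤ p - 1 := by linarith
  have hr0 : (0:ℝ) < (r:ℝ) := by exact_mod_cast hr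
  have hrp : (0:ℝ) < (r:ℝ) ^ ((2:ℝ)/p) := Real.rpow_pos_of_pos hr0 _
  -- the number of samples
  set k : ℕ := ⌈4 * (p - 1) * (r : ℝ) ^ ((2 : ℝ) / p) / ε ^ 2⌉₊ with hkdef
  have hargpos : 0 < 4 * (p - 1) * (r : ℝ) ^ ((2 : ℝ) / p) / ε ^ 2 := by positivity
  have hk0 : 0 < k := Nat.ceil_pos.mpr hargpos
  have hkR : 4 * (p - 1) * (r : ℝ) ^ ((2 : ℝ) / p) / ε ^ 2 ≤ (k:ℝ) := Nat.le_ceil _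
  have hkpos : (0:ℝ) < (k:ℝ) := by exact_mod_cast hk0
  -- convex combination
  rw [_root_.convexHull_eq] at hx
  obtain ⟨ι, t, w, z, hw0, hw1, hz, hcm⟩ := hx
  -- pass to the subtype
  set ι' := {i // i ∈ t}
  have hw1' : ∑ i : ι', w i.1 = 1 := by rw [Finset.sum_coe_sort t w]; exact hw1
  have hw0' : ∀ i : ι', 0 ≤ w i.1 := fun i => hw0 i.1 i.2
  -- choose bases
  have hzB : ∀ i : ι', ∃ B, M.IsBase B ∧ z i.1 = fun e => if e ∈ B then (1:ℝ) else 0 :=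
    fun i => hz i.1 i.2
  choose Bs hBase hBind using hzB
  set χ : ι' → α → ℝ := fun i e => if e ∈ Bs i then (1:ℝ) else 0 with hχdef
  -- x as expectation
  have hxe : ∀ e, x e = ∑ i : ι', w i.1 * χ i e := by
    intro e
    have h1 : x = ∑ i ∈ t, w i • z i := by
      rw [← hcm, Finset.centerMass, hw1, inv_one, one_smul]
    have h2 : x e = ∑ i ∈ t, w i * z i e := by
      rw [h1]
      rw [Finset.sum_apply]
      simp [Pi.smul_apply, smul_eq_mul]
    rw [h2, ← Finset.sum_coe_sort t (fun i => w i * z i e)]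
    refine Finset.sum_congr rfl fun i _ => ?_
    rw [hBind i]
  have hχ01 : ∀ i e, χ i e = 0 ∨ χ i e = 1 := by
    intro i e
    by_cases h : e ∈ Bs i <;> simp [hχdef, h]
  have hx0 : ∀ e, 0 ≤ x e := by
    intro e
    rw [hxe e]
    exact Finset.sum_nonneg fun i _ => mul_nonneg (hw0' i)
      (by rcases hχ01 i e with h | h <;> rw [h] <;> norm_num)
  have hx1 : ∀ e, x e ≤ 1 := by
    intro e
    rw [hxe e, ← hw1']
    exact Finset.sum_le_sum fun i _ => by
      rcases hχ01 i e with h | h <;> rw [h] <;>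
        simp [hw0' i]
  -- row sums of bases
  have hχsum : ∀ i : ι', ∑ e, χ i e = (r:ℝ) := by
    intro i
    have h1 : ∑ e, χ i e = ((Finset.univ.filter fun e => e ∈ Bs i).card : ℝ) := by
      simp [hχdef, Finset.sum_boole]
    have h2 : (Bs i).ncard = (Finset.univ.filter fun e => e ∈ Bs i).card := by
      rw [Set.ncard_eq_toFinset_card']
      congr 1
      ext e
      simp [Set.mem_toFinset]
    rw [h1, ← h2, hrank _ (hBase i)]
  have hxr : ∑ e, x e = (r:ℝ) := by
    rw [Finset.sum_congr rfl fun e _ => hxe e, Finset.sum_comm]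
    calc ∑ i : ι', ∑ e, w i.1 * χ i e = ∑ i : ι', w i.1 * ∑ e, χ i e := by
          exact Finset.sum_congr rfl fun i _ => (Finset.mul_sum _ _ _).symm
      _ = ∑ i : ι', w i.1 * (r:ℝ) := Finset.sum_congr rfl fun i _ => by rw [hχsum i]
      _ = (r:ℝ) := by rw [← Finset.sum_mul, hw1', one_mul]
  -- the per-coordinate variables
  set Y : α → ι' → ℝ := fun e i => χ i e - x e with hYdef
  have hY0 : ∀ e, ∑ i : ι', w i.1 * Y e i = 0 := by
    intro e
    simp only [hYdef, mul_sub]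
    rw [Finset.sum_sub_distrib, ← Finset.sum_mul, hw1', one_mul, ← hxe e, sub_self]
  have hYabs : ∀ e i, |Y e i| ≤ 1 := by
    intro e i
    rw [hYdef]
    rcases hχ01 i e with h | h <;> rw [abs_le] <;> constructor <;>
      simp only [h] <;> linarith [hx0 e, hx1 e]
  have hYp : ∀ e, ∑ i : ι', w i.1 * |Y e i| ^ p ≤ x e := by
    intro e
    have hsq : ∀ i : ι', w i.1 * |Y e i| ^ p ≤ w i.1 * (Y e i)^(2:ℕ) := fun i =>
      mul_le_mul_of_nonneg_left (abs_rpow_le_sq hp (hYabs e i)) (hw0' i)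
    have hvar : ∑ i : ι', w i.1 * (Y e i)^(2:ℕ) = x e - (x e)^(2:ℕ) := by
      have hterm : ∀ i : ι', w i.1 * (Y e i)^(2:ℕ)
          = w i.1 * χ i e - 2*(x e)*(w i.1 * χ i e) + (x e)^(2:ℕ) * w i.1 := by
        intro i
        have hc2 : (χ i e)^(2:ℕ) = χ i e := by
          rcases hχ01 i e with h | h <;> rw [h] <;> norm_num
        calc w i.1 * (Y e i)^(2:ℕ)
            = w i.1 * ((χ i e)^(2:ℕ)) - 2*(x e)*(w i.1 * χ i e) + (x e)^(2:ℕ) * w i.1 := by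
              rw [hYdef]; ring
          _ = w i.1 * χ i e - 2*(x e)*(w i.1 * χ i e) + (x e)^(2:ℕ) * w i.1 := by rw [hc2]
      rw [Finset.sum_congr rfl fun i _ => hterm i]
      rw [Finset.sum_add_distrib, Finset.sum_sub_distrib, ← Finset.mul_sum, ← Finset.mul_sum,
        ← hxe e, hw1']
      ring
    calc ∑ i : ι', w i.1 * |Y e i| ^ p ≤ ∑ i : ι', w i.1 * (Y e i)^(2:ℕ) :=
          Finset.sum_le_sum fun i _ => hsq i
      _ = x e - (x e)^(2:ℕ) := hvar
      _ ≤ x e := by nlinarith [sq_nonneg (x e)]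
  -- apply the recursion lemma per coordinate
  have hper : ∀ e, ∑ ω : Fin k → ι', (∏ t', w (ω t').1) * |∑ t', Y e (ω t')|^p
      ≤ (4*(p-1)*(k:ℝ))^(p/2) * x e := by
    intro e
    have h := lemR hp (fun i : ι' => w i.1) (Y e) hw0' hw1' (hY0 e) k
    have hV0 : 0 ≤ ∑ i : ι', w i.1 * |Y e i|^p := Finset.sum_nonneg fun i _ =>
      mul_nonneg (hw0' i) (Real.rpow_nonneg (abs_nonneg _) _)
    have hck : (0:ℝ) ≤ 4*(p-1)*(k:ℝ) := by positivity
    have heq : (4*(p-1)*(k:ℝ) * (∑ i : ι', w i.1 * |Y e i| ^ p) ^ ((2:ℝ)/p)) ^ (p/2)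
        = (4*(p-1)*(k:ℝ))^(p/2) * (∑ i : ι', w i.1 * |Y e i| ^ p) := by
      rw [Real.mul_rpow hck (Real.rpow_nonneg hV0 _), ← Real.rpow_mul hV0,
        show (2:ℝ)/p * (p/2) = 1 by field_simp, Real.rpow_one]
    rw [heq] at h
    exact le_trans h (mul_le_mul_of_nonneg_left (hYp e) (Real.rpow_nonneg hck _))
  -- total expectation bound
  set Wt : (Fin k → ι') → ℝ := fun ω => ∏ t', w (ω t').1 with hWtdef
  have hWt0 : ∀ ω, 0 ≤ Wt ω := fun ω => Finset.prod_nonneg fun t' _ => hw0' _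
  have hWt1 : ∑ ω : Fin k → ι', Wt ω = 1 := by
    have := sum_prod_weights (fun i : ι' => w i.1) k
    rw [hWtdef]
    rw [this, hw1', one_pow]
  have htot : ∑ ω : Fin k → ι', Wt ω * (∑ e, |∑ t', Y e (ω t')|^p)
      ≤ (4*(p-1)*(k:ℝ))^(p/2) * (r:ℝ) := by
    calc ∑ ω : Fin k → ι', Wt ω * (∑ e, |∑ t', Y e (ω t')|^p)
        = ∑ ω : Fin k → ι', ∑ e, Wt ω * |∑ t', Y e (ω t')|^p :=
          Finset.sum_congr rfl fun ω _ => Finset.mul_sum _ _ _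
      _ = ∑ e, ∑ ω : Fin k → ι', Wt ω * |∑ t', Y e (ω t')|^p := Finset.sum_comm
      _ ≤ ∑ e, (4*(p-1)*(k:ℝ))^(p/2) * x e := Finset.sum_le_sum fun e _ => hper e
      _ = (4*(p-1)*(k:ℝ))^(p/2) * (r:ℝ) := by rw [← Finset.mul_sum, hxr]
  -- representation of the error vector
  have hSrep : ∀ (ω : Fin k → ι') (e : α), (1/(k:ℝ)) * (∑ t', χ (ω t') e) - x e
      = (∑ t', Y e (ω t')) / (k:ℝ) := by
    intro ω e
    simp only [hYdef]
    rw [Finset.sum_sub_distrib, Finset.sum_const, Finset.card_univ, Fintype.card_fin,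
      nsmul_eq_mul]
    field_simp
  have habs : ∀ (ω : Fin k → ι') (e : α), |(∑ t', Y e (ω t')) / (k:ℝ)|^p
      = |∑ t', Y e (ω t')|^p / (k:ℝ)^p := by
    intro ω e
    rw [abs_div, abs_of_pos hkpos, Real.div_rpow (abs_nonneg _) hkpos.le]
  -- the key ratio bound
  have hkp : (0:ℝ) < (k:ℝ)^p := Real.rpow_pos_of_pos hkpos _
  have hratio : (4*(p-1)*(k:ℝ))^(p/2) * (r:ℝ) / (k:ℝ)^p ≤ ε^p := by
    have h1 : 4*(p-1)*(k:ℝ) = (4*(p-1)/(k:ℝ)) * ((k:ℝ)^(2:ℕ)) := by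
      field_simp
    have h2 : (4*(p-1)*(k:ℝ))^(p/2) = (4*(p-1)/(k:ℝ))^(p/2) * (k:ℝ)^p := by
      rw [h1, Real.mul_rpow (by positivity) (by positivity), sq_rpow_half hkpos.le]
    have h3 : 4*(p-1)/(k:ℝ) ≤ ε^(2:ℕ)/(r:ℝ)^((2:ℝ)/p) := by
      rw [div_le_div_iff₀ hkpos hrp]
      have h := mul_le_mul_of_nonneg_right hkR (show (0:ℝ) ≤ ε^(2:ℕ) by positivity)
      calc 4*(p-1)*(r:ℝ)^((2:ℝ)/p) = (4*(p-1)*(r:ℝ)^((2:ℝ)/p)/ε^2) * ε^2 := by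
            field_simp
        _ ≤ (k:ℝ) * ε^2 := h
        _ = ε^(2:ℕ) * (k:ℝ) := by ring
    have h4 : (4*(p-1)/(k:ℝ))^(p/2) ≤ (ε^(2:ℕ)/(r:ℝ)^((2:ℝ)/p))^(p/2) :=
      Real.rpow_le_rpow (by positivity) h3 (by positivity)
    have h5 : (ε^(2:ℕ)/(r:ℝ)^((2:ℝ)/p))^(p/2) = ε^p / (r:ℝ) := by
      rw [Real.div_rpow (by positivity) hrp.le, sq_rpow_half hε.le, ← Real.rpow_mul hr0.le,
        show (2:ℝ)/p*(p/2) = 1 by field_simp, Real.rpow_one]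
    rw [h2]
    rw [show (4*(p-1)/(k:ℝ))^(p/2) * (k:ℝ)^p * (r:ℝ) / (k:ℝ)^p
      = (4*(p-1)/(k:ℝ))^(p/2) * (r:ℝ) by field_simp]
    calc (4*(p-1)/(k:ℝ))^(p/2) * (r:ℝ) ≤ (ε^p/(r:ℝ)) * (r:ℝ) := by
          rw [← h5]
          exact mul_le_mul_of_nonneg_right h4 hr0.le
      _ = ε^p := by field_simp
  -- expectation of the p-th power error
  have hEF : ∑ ω : Fin k → ι', Wt ω *
      (∑ e, |(1/(k:ℝ)) * (∑ t', χ (ω t') e) - x e|^p) ≤ ε^p := by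
    have he : ∀ ω : Fin k → ι', ∑ e, |(1/(k:ℝ)) * (∑ t', χ (ω t') e) - x e|^p
        = (∑ e, |∑ t', Y e (ω t')|^p) / (k:ℝ)^p := by
      intro ω
      rw [Finset.sum_congr rfl fun e _ => by rw [hSrep ω e, habs ω e]]
      rw [Finset.sum_div]
    calc ∑ ω : Fin k → ι', Wt ω * (∑ e, |(1/(k:ℝ)) * (∑ t', χ (ω t') e) - x e|^p)
        = ∑ ω : Fin k → ι', Wt ω * ((∑ e, |∑ t', Y e (ω t')|^p) / (k:ℝ)^p) :=
          Finset.sum_congr rfl fun ω _ => by rw [he ω]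
      _ = (∑ ω : Fin k → ι', Wt ω * (∑ e, |∑ t', Y e (ω t')|^p)) / (k:ℝ)^p := by
          rw [Finset.sum_div]
          exact Finset.sum_congr rfl fun ω _ => by rw [mul_div_assoc]
      _ ≤ (4*(p-1)*(k:ℝ))^(p/2) * (r:ℝ) / (k:ℝ)^p :=
          (div_le_div_iff_of_pos_right hkp).mpr htot
      _ ≤ ε^p := hratio
  obtain ⟨ω₀, hω₀⟩ := exists_le_weighted Wt
    (fun ω => ∑ e, |(1/(k:ℝ)) * (∑ t', χ (ω t') e) - x e|^p) hWt0 hWt1 hEF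
  refine ⟨k, hk0, le_rfl, fun t' => Bs (ω₀ t'), fun t' => hBase _, ?_⟩
  simp only [hχdef] at hω₀
  have hsum_nn : 0 ≤ ∑ e, |(1/(k:ℝ)) * (∑ t', if e ∈ Bs (ω₀ t') then (1:ℝ) else 0) - x e|^p :=
    Finset.sum_nonneg fun e _ => Real.rpow_nonneg (abs_nonneg _) _
  have hfinal := Real.rpow_le_rpow hsum_nn hω₀ (show (0:ℝ) ≤ 1/p by positivity)
  rw [show (ε^p)^(1/p) = ε by rw [one_div, Real.rpow_rpow_inv hε.le hp0.ne']] at hfinal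
  exact hfinal
end

section
/- Let n be a positive integer and let f : 2^{[n]} → ℝ be a submodular function with f(∅) = 0, i.e. f(S) + f(T) ≥ f(S ∪ T) + f(S ∩ T) for all S, T ⊆ [n]. Define the base polyhedron B_f = {x ∈ ℝ^n : Σ_{i∈A} xᵢ ≤ f(A) for all A ⊆ [n], and Σ_{i∈[n]} xᵢ = f([n])}. Let c ∈ ℝ^n satisfy c₁ ≤ c₂ ≤ … ≤ cₙ, and define q ∈ ℝ^n by qᵢ = f({1,…,i}) − f({1,…,i−1}) for each i. Then q ∈ B_f and ⟨c, q⟩ = min{⟨c, x⟩ : x ∈ B_f}; that is, the greedy vector q solves the linear optimization problem over the base polyhedron. -/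
open Finset

/-- **Edmonds' greedy algorithm for linear optimization over the submodular base
polyhedron** (Lemma 5.4 of the paper): for a submodular `f` with `f(∅) = 0` and weights
`c₁ ≤ … ≤ cₙ`, the greedy vector `qᵢ = f({1,…,i}) - f({1,…,i-1})` lies in the base
polyhedron `B_f` and minimizes `⟨c,·⟩` over `B_f`. -/
theorem edmonds_greedy (n : ℕ) (hn : 0 < n)
    (f : Finset (Fin n) → ℝ) (hf0 : f ∅ = 0)
    (hsub : ∀ S T : Finset (Fin n), f (S ∪ T) + f (S ∩ T) ≤ f S + f T)
    (c : Fin n → ℝ) (hc : Monotone c)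
    (q : Fin n → ℝ) (hq : ∀ i, q i = f (Finset.Iic i) - f (Finset.Iio i)) :
    ((∀ A : Finset (Fin n), ∑ i ∈ A, q i ≤ f A) ∧ (∑ i, q i = f Finset.univ)) ∧
    IsLeast {v : ℝ | ∃ x : Fin n → ℝ,
        ((∀ A : Finset (Fin n), ∑ i ∈ A, x i ≤ f A) ∧ (∑ i, x i = f Finset.univ)) ∧
        v = ∑ i, c i * x i}
      (∑ i, c i * q i) := by
  haveI : NeZero n := ⟨hn.ne'⟩
  -- telescoping: sum of q over Iic j equals f (Iic j)
  have key : ∀ k : ℕ, ∀ h : k < n, ∑ i ∈ Iic (⟨k, h⟩ : Fin n), q i = f (Iic ⟨k, h⟩) := by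
    intro k
    induction k with
    | zero =>
      intro h
      have h0 : (⟨0, h⟩ : Fin n) = ⊥ := rfl
      rw [h0]
      have : (Iic (⊥ : Fin n)) = {⊥} := by ext j; simp [le_bot_iff]
      rw [this, sum_singleton, hq, ← this]
      have : (Iio (⊥ : Fin n)) = ∅ := by ext j; simp
      rw [this, hf0, sub_zero]
    | succ k ih =>
      intro h
      have hk : k < n := Nat.lt_of_succ_lt h
      have hio : Iio (⟨k + 1, h⟩ : Fin n) = Iic (⟨k, hk⟩ : Fin n) := by
        ext j
        simp [Fin.lt_def, Fin.le_def, Nat.lt_succ_iff]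
      have hic : Iic (⟨k + 1, h⟩ : Fin n) = insert ⟨k + 1, h⟩ (Iio ⟨k + 1, h⟩) := by
        ext j
        simp [Fin.le_def, Fin.lt_def, Nat.lt_succ_iff, le_iff_lt_or_eq, Fin.ext_iff, or_comm]
      rw [hic, sum_insert (by simp), hq, ← hic, hio, ih hk]
      ring
  have keyF : ∀ j : Fin n, ∑ i ∈ Iic j, q i = f (Iic j) := fun j => key j.val j.isLt
  -- membership constraints for q
  have hmem : ∀ A : Finset (Fin n), ∑ i ∈ A, q i ≤ f A := by
    intro A
    induction A using Finset.strongInduction with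
    | _ A ih =>
      rcases A.eq_empty_or_nonempty with rfl | hA
      · simp [hf0]
      · set m := A.max' hA with hm
        have hmA : m ∈ A := A.max'_mem hA
        have hle : ∀ j ∈ A, j ≤ m := fun j hj => A.le_max' j hj
        have hunion : A ∪ Iio m = Iic m := by
          ext j
          simp only [mem_union, mem_Iio, mem_Iic]
          constructor
          · rintro (hj | hj)
            · exact hle j hj
            · exact hj.le
          · intro hj
            rcases lt_or_eq_of_le hj with hlt | rfl
            · exact Or.inr hlt
            · exact Or.inl hmA
        have hinter : A ∩ Iio m = A.erase m := by
          ext j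
          simp only [mem_inter, mem_Iio, mem_erase]
          constructor
          · rintro ⟨hj, hlt⟩; exact ⟨hlt.ne, hj⟩
          · rintro ⟨hne, hj⟩; exact ⟨hj, lt_of_le_of_ne (hle j hj) hne⟩
        have hsub' := hsub A (Iio m)
        rw [hunion, hinter] at hsub'
        have hiherase := ih (A.erase m) (erase_ssubset hmA)
        have : ∑ i ∈ A, q i = q m + ∑ i ∈ A.erase m, q i := by
          rw [← sum_insert (notMem_erase m A), insert_erase hmA]
        rw [this, hq]
        have := keyF m
        linarith
  -- full sum
  have htop : Iic (⊤ : Fin n) = univ := by ext j; simp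
  have hsum : ∑ i, q i = f univ := by
    have := keyF (⊤ : Fin n)
    rwa [htop] at this
  refine ⟨⟨hmem, hsum⟩, ⟨q, ⟨hmem, hsum⟩, rfl⟩, ?_⟩
  -- lower bound
  rintro v ⟨x, ⟨hx, hxsum⟩, rfl⟩
  set d : Fin n → ℝ := fun i => x i - q i with hd
  set C : ℕ → ℝ := fun k => if h : k < n then c ⟨k, h⟩ else 0 with hC
  set D : ℕ → ℝ := fun k => if h : k < n then d ⟨k, h⟩ else 0 with hD
  have hrange : ∀ k (h : k < n), ∑ j ∈ range (k + 1), D j = ∑ j ∈ Iic (⟨k, h⟩ : Fin n), d j := by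
    intro k h
    refine sum_nbij' (fun i => if hi : i < n then (⟨i, hi⟩ : Fin n) else ⊥)
      (fun j => j.val) ?_ ?_ ?_ ?_ ?_
    · intro i hi
      simp only [mem_range] at hi
      have hi' : i < n := lt_of_lt_of_le hi h
      simp [hi', Fin.le_def, Nat.lt_succ_iff.mp hi]
    · intro j hj
      simp only [mem_Iic, Fin.le_def] at hj
      simp [mem_range, Nat.lt_succ_iff, hj]
    · intro i hi
      simp only [mem_range] at hi
      have hi' : i < n := lt_of_lt_of_le hi h
      simp [hi']
    · intro j _
      simp [j.isLt]
    · intro i hi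
      simp only [mem_range] at hi
      have hi' : i < n := lt_of_lt_of_le hi h
      simp [hD, hi']
  have hpartial : ∀ k (h : k < n), ∑ j ∈ range (k + 1), D j ≤ 0 := by
    intro k h
    rw [hrange k h]
    have h1 := hx (Iic (⟨k, h⟩ : Fin n))
    have h2 := keyF (⟨k, h⟩ : Fin n)
    have : ∑ j ∈ Iic (⟨k, h⟩ : Fin n), d j
        = ∑ j ∈ Iic (⟨k, h⟩ : Fin n), x j - ∑ j ∈ Iic (⟨k, h⟩ : Fin n), q j := by
      rw [← sum_sub_distrib]
    rw [this]
    linarith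
  have htotal : ∑ j ∈ range n, D j = 0 := by
    have : ∑ j ∈ range n, D j = ∑ j : Fin n, d j := by
      rw [← Fin.sum_univ_eq_sum_range]
      refine Finset.sum_congr rfl fun i _ => by simp [hD, i.isLt]
    rw [this]
    have : ∑ j : Fin n, d j = ∑ j, x j - ∑ j, q j := by rw [← sum_sub_distrib]
    rw [this, hxsum, hsum]
    ring
  have habel := Finset.sum_range_by_parts C D n
  have hCD : ∑ i ∈ range n, C i • D i = ∑ i : Fin n, c i * d i := by
    rw [← Fin.sum_univ_eq_sum_range]
    refine Finset.sum_congr rfl fun i _ => by simp [hC, hD, i.isLt, smul_eq_mul]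
  have hfinal : (0:ℝ) ≤ ∑ i : Fin n, c i * d i := by
    rw [← hCD, habel, htotal, smul_zero, zero_sub, neg_nonneg]
    apply Finset.sum_nonpos
    intro i hi
    simp only [mem_range] at hi
    have hi1 : i + 1 < n := by omega
    have hi0 : i < n := by omega
    have hstep : 0 ≤ C (i + 1) - C i := by
      simp only [hC, dif_pos hi1, dif_pos hi0, sub_nonneg]
      exact hc (by simp [Fin.le_def])
    have hP := hpartial i hi0
    rw [smul_eq_mul]
    exact mul_nonpos_of_nonneg_of_nonpos hstep hP
  have : ∑ i : Fin n, c i * x i = ∑ i, c i * q i + ∑ i, c i * d i := by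
    rw [← sum_add_distrib]
    refine Finset.sum_congr rfl fun i _ => by simp [hd]; ring
  rw [this]
  linarith
end
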